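/- Let L be an ideal of measurable functions and ‖·‖ a lattice seminorm on L (|f| ≤ |g| a.e. implies ‖f‖ ≤ ‖g‖). For f₁, …, fₘ ∈ L and α₁, …, αₘ > 0 with Σ αᵢ = 1, the pointwise product |f₁|^(α₁) ⋯ |fₘ|^(αₘ) belongs to L and ‖ |f₁|^(α₁) ⋯ |fₘ|^(αₘ) ‖ ≤ ‖f₁‖^(α₁) ⋯ ‖fₘ‖^(αₘ). -/

import Mathlib

open MeasureTheory Filter Topology

theorem lattice_seminorm_geom_mean {X : Type*} [MeasurableSpace X] (μ : Measure X)
    [SigmaFinite μ] (L : Set (X → ℝ))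
    (hL_meas : ∀ f ∈ L, Measurable f)
    (hL_add : ∀ f ∈ L, ∀ g ∈ L, f + g ∈ L)
    (hL_smul : ∀ (c : ℝ), ∀ f ∈ L, c • f ∈ L)
    (hL_ideal : ∀ f : X → ℝ, Measurable f → ∀ g ∈ L,
      (∀ᵐ x ∂μ, |f x| ≤ |g x|) → f ∈ L)
    (N : (X → ℝ) → ℝ)
    (hN_add : ∀ f g, N (f + g) ≤ N f + N g)
    (hN_smul : ∀ (c : ℝ) f, N (c • f) = |c| * N f)
    (hN_mono : ∀ f ∈ L, ∀ g ∈ L, (∀ᵐ x ∂μ, |f x| ≤ |g x|) → N f ≤ N g)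
    {m : ℕ} (f : Fin m → X → ℝ) (hf : ∀ i, f i ∈ L)
    (α : Fin m → ℝ) (hα : ∀ i, 0 < α i) (hsum : ∑ i, α i = 1) :
    (fun x => ∏ i, |f i x| ^ (α i)) ∈ L ∧
    N (fun x => ∏ i, |f i x| ^ (α i)) ≤ ∏ i, (N (f i)) ^ (α i) := by
  -- m must be positive
  rcases Nat.eq_zero_or_pos m with hm | hm
  · subst hm; simp at hsum
  have i0 : Fin m := ⟨0, hm⟩
  -- 0 ∈ L
  have h0L : (0 : X → ℝ) ∈ L := by
    have := hL_smul 0 (f i0) (hf i0)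
    simpa using this
  have hN0 : N 0 = 0 := by
    have := hN_smul 0 0
    simpa using this
  have hN_nonneg : ∀ g, 0 ≤ N g := by
    intro g
    have h1 : N ((-1:ℝ) • g) = N g := by rw [hN_smul]; simp
    have h2 : g + (-1:ℝ) • g = 0 := by funext x; simp
    have h3 := hN_add g ((-1:ℝ) • g)
    rw [h2, hN0, h1] at h3
    linarith
  have habsL : ∀ i, (fun x => |f i x|) ∈ L := fun i =>
    hL_ideal _ (hL_meas _ (hf i)).abs _ (hf i)
      (Filter.Eventually.of_forall fun x => by simp)
  have habsN : ∀ i, N (fun x => |f i x|) ≤ N (f i) := fun i =>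
    hN_mono _ (habsL i) _ (hf i) (Filter.Eventually.of_forall fun x => by simp)
  -- weighted sums of |f i| belong to L and N is subadditive over them
  have key : ∀ s : Finset (Fin m), ∀ c : Fin m → ℝ, (∀ i, 0 ≤ c i) →
      (fun x => ∑ i ∈ s, c i * |f i x|) ∈ L ∧
      N (fun x => ∑ i ∈ s, c i * |f i x|) ≤ ∑ i ∈ s, c i * N (fun x => |f i x|) := by
    intro s c hc
    induction s using Finset.induction with
    | empty =>
      constructor
      · simpa using (show (fun _ : X => (0:ℝ)) ∈ L from h0L)
      · simp [show (fun _ : X => (0:ℝ)) = 0 from rfl, hN0]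
    | @insert a s hnotmem ih =>
      have hsplit : (fun x => ∑ i ∈ insert a s, c i * |f i x|) =
          (c a • fun x => |f a x|) + (fun x => ∑ i ∈ s, c i * |f i x|) := by
        funext x
        simp [Finset.sum_insert hnotmem]
      constructor
      · rw [hsplit]
        exact hL_add _ (hL_smul _ _ (habsL a)) _ ih.1
      · rw [hsplit, Finset.sum_insert hnotmem]
        calc N ((c a • fun x => |f a x|) + fun x => ∑ i ∈ s, c i * |f i x|)
            ≤ N (c a • fun x => |f a x|) + N (fun x => ∑ i ∈ s, c i * |f i x|) :=
              hN_add _ _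
          _ ≤ c a * N (fun x => |f a x|) + ∑ i ∈ s, c i * N (fun x => |f i x|) := by
              rw [hN_smul, abs_of_nonneg (hc a)]
              exact add_le_add le_rfl ih.2
  -- pointwise AM-GM with scaling constants
  have amgm : ∀ c : Fin m → ℝ, (∀ i, 0 < c i) → ∀ x : X,
      ∏ i, |f i x| ^ α i ≤ (∏ i, c i ^ α i) * ∑ i, (α i / c i) * |f i x| := by
    intro c hc x
    have h := Real.geom_mean_le_arith_mean_weighted Finset.univ α
      (fun i => |f i x| / c i) (fun i _ => (hα i).le) hsum
      (fun i _ => div_nonneg (abs_nonneg _) (hc i).le)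
    have heq : ∏ i, |f i x| ^ α i =
        (∏ i, c i ^ α i) * ∏ i, (|f i x| / c i) ^ α i := by
      rw [← Finset.prod_mul_distrib]
      refine Finset.prod_congr rfl fun i _ => ?_
      rw [← Real.mul_rpow (hc i).le (div_nonneg (abs_nonneg _) (hc i).le),
        mul_div_cancel₀ _ (hc i).ne']
    rw [heq]
    have hC : 0 ≤ ∏ i, c i ^ α i :=
      Finset.prod_nonneg fun i _ => Real.rpow_nonneg (hc i).le _
    calc (∏ i, c i ^ α i) * ∏ i, (|f i x| / c i) ^ α i
        ≤ (∏ i, c i ^ α i) * ∑ i, α i * (|f i x| / c i) :=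
          mul_le_mul_of_nonneg_left h hC
      _ = (∏ i, c i ^ α i) * ∑ i, (α i / c i) * |f i x| := by
          congr 1
          refine Finset.sum_congr rfl fun i _ => ?_
          field_simp
  set g : X → ℝ := fun x => ∏ i, |f i x| ^ α i with hg_def
  have hg_nonneg : ∀ x, 0 ≤ g x := fun x =>
    Finset.prod_nonneg fun i _ => Real.rpow_nonneg (abs_nonneg _) _
  have hg_meas : Measurable g :=
    Finset.measurable_prod _ fun i _ =>
      (Real.continuous_rpow_const (hα i).le).measurable.comp (hL_meas _ (hf i)).abs
  -- membership in L: dominate by ∑ α i |f i|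
  have hgL : g ∈ L := by
    obtain ⟨hmemL, -⟩ := key Finset.univ (fun i => α i / 1) (fun i => div_nonneg (hα i).le zero_le_one)
    refine hL_ideal g hg_meas _ hmemL (Filter.Eventually.of_forall fun x => ?_)
    have h := amgm (fun _ => 1) (fun _ => one_pos) x
    simp only [Real.one_rpow, Finset.prod_const_one, one_mul] at h
    rw [abs_of_nonneg (hg_nonneg x)]
    refine h.trans (le_abs_self _)
  -- the ε-perturbed norm bound
  have main : ∀ ε : ℝ, 0 < ε → N g ≤ ∏ i, (N (f i) + ε) ^ α i := by
    intro ε hε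
    set c : Fin m → ℝ := fun i => N (f i) + ε with hc_def
    have hc : ∀ i, 0 < c i := fun i => add_pos_of_nonneg_of_pos (hN_nonneg _) hε
    set C : ℝ := ∏ i, c i ^ α i with hC_def
    have hC : 0 ≤ C := Finset.prod_nonneg fun i _ => Real.rpow_nonneg (hc i).le _
    obtain ⟨hhL, hhN⟩ := key Finset.univ (fun i => α i / c i)
      (fun i => div_nonneg (hα i).le (hc i).le)
    set h : X → ℝ := fun x => ∑ i, (α i / c i) * |f i x| with hh_def
    have hh_nonneg : ∀ x, 0 ≤ h x := fun x =>
      Finset.sum_nonneg fun i _ =>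
        mul_nonneg (div_nonneg (hα i).le (hc i).le) (abs_nonneg _)
    have h1 : N g ≤ N (C • h) := by
      refine hN_mono _ hgL _ (hL_smul C _ hhL) (Filter.Eventually.of_forall fun x => ?_)
      rw [abs_of_nonneg (hg_nonneg x)]
      refine (amgm c hc x).trans (le_abs_self _)
    have h2 : N (C • h) = C * N h := by rw [hN_smul, abs_of_nonneg hC]
    have h3 : N h ≤ 1 := by
      refine hhN.trans ?_
      rw [← hsum]
      refine Finset.sum_le_sum fun i _ => ?_
      calc (α i / c i) * N (fun x => |f i x|) ≤ (α i / c i) * c i := by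
            refine mul_le_mul_of_nonneg_left ?_ (div_nonneg (hα i).le (hc i).le)
            exact (habsN i).trans (by simp [hc_def, hε.le])
        _ = α i := div_mul_cancel₀ _ (hc i).ne'
    calc N g ≤ C * N h := h2 ▸ h1
      _ ≤ C * 1 := mul_le_mul_of_nonneg_left h3 hC
      _ = C := mul_one C
  refine ⟨hgL, ?_⟩
  have tend : Tendsto (fun ε : ℝ => ∏ i, (N (f i) + ε) ^ α i)
      (𝓝[>] (0:ℝ)) (𝓝 (∏ i, (N (f i)) ^ α i)) := by
    apply tendsto_finset_prod
    intro i _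
    have h1 : Tendsto (fun ε : ℝ => N (f i) + ε) (𝓝[>] (0:ℝ)) (𝓝 (N (f i))) := by
      have h2 : Tendsto (fun ε : ℝ => N (f i) + ε) (𝓝 (0:ℝ)) (𝓝 (N (f i) + 0)) :=
        (continuous_const.add continuous_id).tendsto 0
      rw [add_zero] at h2
      exact h2.mono_left nhdsWithin_le_nhds
    exact ((Real.continuousAt_rpow_const _ _ (Or.inr (hα i).le)).tendsto.comp h1)
  refine ge_of_tendsto tend ?_
  filter_upwards [self_mem_nhdsWithin] with ε hε using main ε hε
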